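/- Let k be a field, A, B k-vector spaces, A'' , B'' k-vector spaces, and A' ≤ A'', B' ≤ B'' subspaces. Suppose t ∈ Hom_k(A, A'') ⊗ Hom_k(B, B'') is an element whose image under the canonical map Hom_k(A, A'') ⊗ Hom_k(B, B'') → Hom_k(A ⊗ B, A'' ⊗ B'') is a linear map A ⊗ B → A'' ⊗ B'' whose range is contained in the subspace A' ⊗ B' of A'' ⊗ B''. Then t lies in the image of the map Hom_k(A, A') ⊗ Hom_k(B, B') → Hom_k(A, A'') ⊗ Hom_k(B, B'') induced by the inclusions A' ≤ A'' and B' ≤ B''. (Equivalently, the square comparing Hom_k(A, A') ⊗ Hom_k(B, B') and Hom_k(A, A'') ⊗ Hom_k(B, B'') over Hom_k(A ⊗ B, A' ⊗ B') and Hom_k(A ⊗ B, A'' ⊗ B'') is cartesian.) -/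

import Mathlib

open TensorProduct

/-- Evaluation injectivity: an element of `P ⊗ Hom(B, W)` all of whose evaluations vanish is 0. -/
lemma aux_eval_inj {k : Type*} [Field k] {P B W : Type*}
    [AddCommGroup P] [Module k P] [AddCommGroup B] [Module k B]
    [AddCommGroup W] [Module k W]
    (s : P ⊗[k] (B →ₗ[k] W))
    (h : ∀ x : B, LinearMap.lTensor P (LinearMap.applyₗ x) s = 0) : s = 0 := by
  classical
  set e := Module.Basis.ofVectorSpace k P
  obtain ⟨d, hd⟩ := TensorProduct.eq_repr_basis_left e s
  have hzero : ∀ j, d j = 0 := by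
    intro j
    ext x
    have h1 : (d.mapRange (fun f => f x) rfl).sum (fun j w => e j ⊗ₜ[k] w) = 0 := by
      rw [Finsupp.sum_mapRange_index (by simp)]
      have := h x
      rw [← hd, Finsupp.sum, map_sum] at this
      simpa [Finsupp.sum] using this
    have := TensorProduct.sum_tmul_basis_left_eq_zero e _ h1
    simpa using DFunLike.congr_fun this j
  rw [← hd]
  rw [Finsupp.sum]
  apply Finset.sum_eq_zero
  intro j _
  rw [hzero j, tmul_zero]

lemma aux_key {k : Type*} [Field k] {P B W : Type*}
    [AddCommGroup P] [Module k P] [AddCommGroup B] [Module k B]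
    [AddCommGroup W] [Module k W] {κ : Type*}
    {g : κ → (B →ₗ[k] W)} (hg : LinearIndependent k g)
    (c : κ →₀ P) (h : ∀ x : B, (c.sum fun i p => p ⊗ₜ[k] (g i) x) = (0 : P ⊗[k] W)) :
    c = 0 := by
  classical
  set Φ : (κ →₀ P) →ₗ[k] P ⊗[k] (B →ₗ[k] W) :=
    (LinearMap.lTensor P (Finsupp.linearCombination k g)) ∘ₗ
      (TensorProduct.finsuppScalarRight k k P κ).symm.toLinearMap with hΦ
  have hΦinj : Function.Injective Φ := by
    rw [hΦ, LinearMap.coe_comp]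
    exact (Module.Flat.lTensor_preserves_injective_linearMap
      (Finsupp.linearCombination k g) hg).comp
      (TensorProduct.finsuppScalarRight k k P κ).symm.injective
  have hΦc : ∀ c : κ →₀ P, Φ c = c.sum fun i p => p ⊗ₜ[k] g i := by
    intro c
    induction c using Finsupp.induction_linear with
    | zero => simp
    | add f g' hf hg' =>
        rw [map_add, hf, hg', Finsupp.sum_add_index (by simp) (by intros; rw [add_tmul])]
    | single i p =>
        rw [Finsupp.sum_single_index (by simp)]
        simp [hΦ, TensorProduct.finsuppScalarRight_symm_apply_single]
  have hs : Φ c = 0 := by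
    rw [hΦc c]
    apply aux_eval_inj
    intro x
    rw [Finsupp.sum, map_sum]
    simpa [Finsupp.sum] using h x
  exact hΦinj (by rw [hs]; simp)

/-- If `t ∈ Hom(A, A'') ⊗ Hom(B, B'')` induces a map `A ⊗ B → A'' ⊗ B''` whose range lands
in the subspace `A' ⊗ B'`, then `t` comes from `Hom(A, A') ⊗ Hom(B, B')` via the inclusions. -/
theorem statement13 (k A B A'' B'' : Type) [Field k]
    [AddCommGroup A] [Module k A] [AddCommGroup B] [Module k B]
    [AddCommGroup A''] [Module k A''] [AddCommGroup B''] [Module k B'']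
    (A' : Submodule k A'') (B' : Submodule k B'')
    (t : (A →ₗ[k] A'') ⊗[k] (B →ₗ[k] B''))
    (h : LinearMap.range (TensorProduct.homTensorHomMap (RingHom.id k) A B A'' B'' t) ≤
      LinearMap.range (TensorProduct.map A'.subtype B'.subtype)) :
    t ∈ LinearMap.range
      (TensorProduct.map (LinearMap.llcomp (σ₁₂ := RingHom.id k) (σ₁₃ := RingHom.id k) k A (↥A') A'' A'.subtype)
        (LinearMap.llcomp (σ₁₂ := RingHom.id k) (σ₁₃ := RingHom.id k) k B (↥B') B'' B'.subtype)) := by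
  classical
  set ιA := LinearMap.llcomp (σ₁₂ := RingHom.id k) (σ₁₃ := RingHom.id k) k A (↥A') A'' A'.subtype with hιA
  set ιB := LinearMap.llcomp (σ₁₂ := RingHom.id k) (σ₁₃ := RingHom.id k) k B (↥B') B'' B'.subtype with hιB
  set 𝒞 := Module.Basis.ofVectorSpace k (B →ₗ[k] B'') with h𝒞
  obtain ⟨b, hb⟩ := TensorProduct.eq_repr_basis_right 𝒞 t
  have hkill : ∀ y ∈ LinearMap.range (TensorProduct.map A'.subtype B'.subtype),
      TensorProduct.map A'.mkQ (LinearMap.id : B'' →ₗ[k] B'') y = 0 ∧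
        TensorProduct.map (LinearMap.id : A'' →ₗ[k] A'') B'.mkQ y = 0 := by
    rintro y ⟨z, rfl⟩
    constructor
    · rw [← LinearMap.comp_apply, ← TensorProduct.map_comp,
        show A'.mkQ ∘ₗ A'.subtype = 0 from by ext x; simp]
      try simp
    · rw [← LinearMap.comp_apply, ← TensorProduct.map_comp,
        show B'.mkQ ∘ₗ B'.subtype = 0 from by ext x; simp]
      try simp
  have heval : ∀ (a : A) (x : B), TensorProduct.homTensorHomMap (RingHom.id k) A B A'' B'' t (a ⊗ₜ[k] x)
      = b.sum fun i f => f a ⊗ₜ[k] (𝒞 i) x := by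
    intro a x
    rw [← hb]
    simp only [Finsupp.sum, map_sum, LinearMap.coe_sum, Finset.sum_apply,
      TensorProduct.homTensorHomMap_apply, TensorProduct.map_tmul]
  have hA : ∀ i (a : A), b i a ∈ A' := by
    intro i a
    have hc0 : (b.mapRange (fun f => A'.mkQ (f a)) (by rw [LinearMap.zero_apply, map_zero])) = 0 := by
      apply aux_key 𝒞.linearIndependent
      intro x
      rw [Finsupp.sum_mapRange_index (by simp)]
      have h1 := (hkill _ (h (LinearMap.mem_range_self _ (a ⊗ₜ[k] x)))).1
      rw [heval a x, Finsupp.sum, map_sum] at h1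
      simpa [Finsupp.sum] using h1
    have h2 := DFunLike.congr_fun hc0 i
    simp only [Finsupp.mapRange_apply, Finsupp.coe_zero, Pi.zero_apply] at h2
    rwa [Submodule.mkQ_apply, Submodule.Quotient.mk_eq_zero] at h2
  set F : _ → (A →ₗ[k] ↥A') := fun i => (b i).codRestrict A' (hA i) with hF
  set t₀ : (A →ₗ[k] ↥A') ⊗[k] (B →ₗ[k] B'') := ∑ i ∈ b.support, F i ⊗ₜ[k] 𝒞 i with ht₀def
  have ht₀ : TensorProduct.map ιA LinearMap.id t₀ = t := by
    rw [← hb, Finsupp.sum, ht₀def, map_sum]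
    refine Finset.sum_congr rfl fun i _ => ?_
    rw [TensorProduct.map_tmul]
    refine congrArg₂ (· ⊗ₜ[k] ·) ?_ ?_
    · ext a; simp [hF, hιA]
    · simp
  set ℬ := Module.Basis.ofVectorSpace k (A →ₗ[k] ↥A') with hℬ
  obtain ⟨d, hd⟩ := TensorProduct.eq_repr_basis_left ℬ t₀
  have ht' : t = d.sum fun j g => ιA (ℬ j) ⊗ₜ[k] g := by
    rw [← ht₀, ← hd, Finsupp.sum, Finsupp.sum, map_sum]
    simp [TensorProduct.map_tmul]
  have heval2 : ∀ (a : A) (x : B), TensorProduct.homTensorHomMap (RingHom.id k) A B A'' B'' t (a ⊗ₜ[k] x)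
      = d.sum fun j g => (ιA (ℬ j)) a ⊗ₜ[k] g x := by
    intro a x
    rw [ht']
    simp only [Finsupp.sum, map_sum, LinearMap.coe_sum, Finset.sum_apply,
      TensorProduct.homTensorHomMap_apply, TensorProduct.map_tmul]
  have hgind : LinearIndependent k (fun j => ιA (ℬ j)) := by
    have hker : LinearMap.ker ιA = ⊥ := by
      rw [LinearMap.ker_eq_bot']
      intro f hf
      ext a
      have h3 := DFunLike.congr_fun hf a
      simpa [hιA] using h3
    exact ℬ.linearIndependent.map' ιA hker
  have hB : ∀ j (x : B), d j x ∈ B' := by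
    intro j x
    have hc0 : (d.mapRange (fun g => B'.mkQ (g x)) (by rw [LinearMap.zero_apply, map_zero])) = 0 := by
      apply aux_key hgind
      intro a
      rw [Finsupp.sum_mapRange_index (by simp)]
      have h1 := (hkill _ (h (LinearMap.mem_range_self _ (a ⊗ₜ[k] x)))).2
      rw [heval2 a x, Finsupp.sum, map_sum] at h1
      have h2 := congrArg (TensorProduct.comm k A'' (B'' ⧸ B')) h1
      simpa [Finsupp.sum, map_sum] using h2
    have h2 := DFunLike.congr_fun hc0 j
    simp only [Finsupp.mapRange_apply, Finsupp.coe_zero, Pi.zero_apply] at h2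
    rwa [Submodule.mkQ_apply, Submodule.Quotient.mk_eq_zero] at h2
  refine ⟨∑ j ∈ d.support, ℬ j ⊗ₜ[k] ((d j).codRestrict B' (hB j)), ?_⟩
  rw [map_sum, ht', Finsupp.sum]
  refine Finset.sum_congr rfl fun j _ => ?_
  rw [TensorProduct.map_tmul]
  refine congrArg₂ (· ⊗ₜ[k] ·) rfl ?_
  ext x
  simp [hιB]
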